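/- Let p be an odd prime and a an integer with gcd(a,p)=1. Then for every natural number l, one has S(p^{2l+1}, a) = p^l · S(p, a). -/

import Mathlib

open Finset

/-- `e z = exp(2 π i z)`. -/
noncomputable def e (z : ℝ) : ℂ := Complex.exp (2 * Real.pi * Complex.I * z)

/-- The quadratic Gauss sum `S(q,a) = ∑_{r=1}^{q} e(a r² / q)`. -/
noncomputable def S (q : ℕ) (a : ℤ) : ℂ :=
  ∑ r ∈ Finset.Icc 1 q, e ((a : ℝ) * (r : ℝ) ^ 2 / (q : ℝ))

lemma e_add (x y : ℝ) : e (x + y) = e x * e y := by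
  simp [e, mul_add, Complex.exp_add]

lemma e_int (n : ℤ) : e n = 1 := by
  rw [e, show (2:ℂ) * Real.pi * Complex.I * ((n:ℝ):ℂ) = (n:ℤ) * (2 * Real.pi * Complex.I) by push_cast; ring]
  exact Complex.exp_int_mul_two_pi_mul_I n

lemma e_pow (x : ℝ) (n : ℕ) : (e x) ^ n = e (n * x) := by
  simp [e, ← Complex.exp_nat_mul]
  ring_nf

lemma e_eq_one_iff (x : ℝ) : e x = 1 ↔ ∃ n : ℤ, x = n := by
  rw [e, Complex.exp_eq_one_iff]
  constructor
  · rintro ⟨n, hn⟩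
    refine ⟨n, ?_⟩
    have hpi : ((2:ℂ) * Real.pi * Complex.I) ≠ 0 := by
      simp [Real.pi_ne_zero, Complex.I_ne_zero]
    have : ((x:ℂ)) = n := by
      rw [show ((n:ℂ)) * (2 * Real.pi * Complex.I) = (2 * Real.pi * Complex.I) * n by ring] at hn
      exact mul_left_cancel₀ hpi hn
    exact_mod_cast this
  · rintro ⟨n, hn⟩
    exact ⟨n, by rw [hn]; push_cast; ring⟩

lemma sum_e (p : ℕ) (hp : 0 < p) (c : ℤ) :
    ∑ t ∈ range p, e ((c:ℝ) * t / p) = if (p:ℤ) ∣ c then (p:ℂ) else 0 := by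
  split_ifs with h
  · obtain ⟨m, rfl⟩ := h
    have : ∀ t ∈ range p, e ((((p:ℤ)*m : ℤ):ℝ) * t / p) = 1 := by
      intro t _
      have : ((((p:ℤ)*m : ℤ):ℝ) * t / p) = ((m * t : ℤ) : ℝ) := by
        push_cast
        field_simp
      rw [this, e_int]
    rw [Finset.sum_congr rfl this]
    simp
  · have hz : ∀ t ∈ range p, e ((c:ℝ) * t / p) = (e ((c:ℝ)/p)) ^ t := by
      intro t _
      rw [e_pow]
      congr 1
      ring
    rw [Finset.sum_congr rfl hz]
    have hne : e ((c:ℝ)/p) ≠ 1 := by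
      intro hh
      rw [e_eq_one_iff] at hh
      obtain ⟨n, hn⟩ := hh
      apply h
      refine ⟨n, ?_⟩
      have h1 : (c:ℝ) = n * p := by
        field_simp at hn
        linarith [hn]
      have h2 : c = n * p := by exact_mod_cast h1
      rw [h2]; ring
    rw [geom_sum_eq hne]
    have : (e ((c:ℝ)/p)) ^ p = 1 := by
      rw [e_pow]
      have : (p:ℝ) * ((c:ℝ)/p) = ((c:ℤ):ℝ) := by
        field_simp
      rw [this, e_int]
    rw [this]
    simp

lemma sum_range_mul {M : Type*} [AddCommMonoid M] (f : ℕ → M) (m n : ℕ) :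
    ∑ r ∈ range (m * n), f r = ∑ t ∈ range n, ∑ s ∈ range m, f (m * t + s) := by
  induction n with
  | zero => simp
  | succ n ih =>
      rw [Nat.mul_succ, Finset.sum_range_add, ih, Finset.sum_range_succ]

lemma S_eq_range (q : ℕ) (hq : 0 < q) (a : ℤ) :
    S q a = ∑ r ∈ range q, e ((a : ℝ) * (r : ℝ) ^ 2 / (q : ℝ)) := by
  have h1 : Finset.Icc 1 q = insert q (Finset.Ico 1 q) :=
    (Finset.Ico_insert_right (by omega)).symm
  have h2 : Finset.range q = insert 0 (Finset.Ico 1 q) := by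
    ext x; simp [Finset.mem_Ico, Finset.mem_range]; omega
  rw [S, h1, h2, Finset.sum_insert (by simp), Finset.sum_insert (by simp)]
  congr 1
  have hq' : (q:ℝ) ≠ 0 := by positivity
  have e1 : (a : ℝ) * (q : ℝ) ^ 2 / (q : ℝ) = ((a * q : ℤ) : ℝ) := by
    push_cast; field_simp
  have e2 : (a : ℝ) * (0 : ℝ) ^ 2 / (q : ℝ) = ((0 : ℤ) : ℝ) := by simp
  rw [e1, e_int]
  rw [show ((0:ℕ):ℝ) = (0:ℝ) by norm_num] at *
  rw [e2, e_int]

lemma step (p : ℕ) (hp : p.Prime) (hodd : Odd p) (a : ℤ) (ha : Int.gcd a p = 1)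
    (q : ℕ) (hq : 0 < q) : S (q * p ^ 2) a = (p : ℂ) * S q a := by
  have hp0 : 0 < p := hp.pos
  have hp0' : (p:ℝ) ≠ 0 := by positivity
  have hq' : (q:ℝ) ≠ 0 := by positivity
  have hdvd : ∀ s : ℕ, ((p:ℤ) ∣ 2 * a * s) ↔ p ∣ s := by
    intro s
    constructor
    · intro h
      have hpP : Prime (p:ℤ) := Int.prime_iff_natAbs_prime.mpr (by simpa using hp)
      rcases hpP.dvd_mul.mp h with h1 | h1
      · rcases hpP.dvd_mul.mp h1 with h2 | h2
        · exfalso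
          have h3 : p ∣ 2 := by exact_mod_cast h2
          have := (Nat.prime_dvd_prime_iff_eq hp Nat.prime_two).mp h3
          rw [this] at hodd
          exact (Nat.not_odd_iff_even.mpr even_two) hodd
        · exfalso
          have hg : (p:ℤ) ∣ (Int.gcd a p : ℤ) := Int.dvd_coe_gcd h2 dvd_rfl
          rw [ha] at hg
          have : p ∣ 1 := by exact_mod_cast hg
          have h5 := Nat.le_of_dvd one_pos this
          have := hp.two_le
          omega
      · exact_mod_cast h1
    · intro h
      exact Dvd.dvd.mul_left (by exact_mod_cast h) (2 * a)
  have hqp2 : 0 < q * p ^ 2 := by positivity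
  rw [S_eq_range _ hqp2, S_eq_range q hq]
  have hsplit : q * p ^ 2 = q * p * p := by ring
  rw [hsplit, sum_range_mul]
  rw [Finset.sum_comm]
  have hterm : ∀ s ∈ range (q * p), ∀ t ∈ range p,
      e ((a:ℝ) * ((q * p * t + s : ℕ):ℝ) ^ 2 / ((q * p * p : ℕ):ℝ)) =
      e ((a:ℝ) * (s:ℝ) ^ 2 / ((q * p * p : ℕ):ℝ)) * e (((2 * a * s : ℤ):ℝ) * t / p) := by
    intro s _ t _
    have key : (a:ℝ) * ((q * p * t + s : ℕ):ℝ) ^ 2 / ((q * p * p : ℕ):ℝ) =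
        (a:ℝ) * (s:ℝ) ^ 2 / ((q * p * p : ℕ):ℝ) +
        (((2 * a * s : ℤ):ℝ) * t / p + ((a * q * t ^ 2 : ℤ):ℝ)) := by
      push_cast
      field_simp
      ring
    rw [key, e_add, e_add, e_int, mul_one]
  calc
    ∑ s ∈ range (q * p), ∑ t ∈ range p,
        e ((a:ℝ) * ((q * p * t + s : ℕ):ℝ) ^ 2 / ((q * p * p : ℕ):ℝ))
      = ∑ s ∈ range (q * p), e ((a:ℝ) * (s:ℝ) ^ 2 / ((q * p * p : ℕ):ℝ)) *
          (if (p:ℤ) ∣ 2 * a * s then (p:ℂ) else 0) := by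
        refine Finset.sum_congr rfl fun s hs => ?_
        rw [← sum_e p hp0 (2 * a * s), Finset.mul_sum]
        exact Finset.sum_congr rfl fun t ht => hterm s hs t ht
    _ = ∑ s ∈ range (q * p),
          (if p ∣ s then e ((a:ℝ) * (s:ℝ) ^ 2 / ((q * p * p : ℕ):ℝ)) * (p:ℂ) else 0) := by
        refine Finset.sum_congr rfl fun s _ => ?_
        simp only [mul_ite, mul_zero, hdvd s]
    _ = ∑ u ∈ range q, ∑ v ∈ range p,
          (if p ∣ p * u + v then e ((a:ℝ) * ((p * u + v : ℕ):ℝ) ^ 2 / ((q * p * p : ℕ):ℝ)) * (p:ℂ) else 0) := by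
        rw [show q * p = p * q by ring, sum_range_mul]
    _ = ∑ u ∈ range q, e ((a:ℝ) * (u:ℝ) ^ 2 / (q:ℝ)) * (p:ℂ) := by
        refine Finset.sum_congr rfl fun u _ => ?_
        rw [Finset.sum_eq_single 0]
        · have h0 : p ∣ p * u + 0 := ⟨u, by ring⟩
          rw [if_pos h0]
          congr 2
          push_cast
          field_simp
          ring
        · intro v hv hv0
          rw [if_neg]
          intro hdv
          have : p ∣ v := (Nat.dvd_add_right ⟨u, rfl⟩).mp hdv
          have := Nat.le_of_dvd (Nat.pos_of_ne_zero hv0) this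
          simp at hv
          omega
        · intro h
          exact absurd (Finset.mem_range.mpr hp0) h
    _ = (p : ℂ) * ∑ u ∈ range q, e ((a:ℝ) * (u:ℝ) ^ 2 / (q:ℝ)) := by
        rw [Finset.mul_sum]
        exact Finset.sum_congr rfl fun u _ => mul_comm _ _

theorem gauss_sum_odd_prime_power (p : ℕ) (hp : p.Prime) (hodd : Odd p)
    (a : ℤ) (ha : Int.gcd a p = 1) (l : ℕ) :
    S (p ^ (2 * l + 1)) a = (p : ℂ) ^ l * S p a := by
  induction l with
  | zero => simp
  | succ l ih =>
      have h1 : p ^ (2 * (l + 1) + 1) = p ^ (2 * l + 1) * p ^ 2 := by ring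
      rw [h1, step p hp hodd a ha _ (pow_pos hp.pos _), ih]
      ring
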